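/- Let k be a field of characteristic not 2, Λ the exterior algebra on c generators, A = Λ ⋊ C_2, and λ ∈ k^c nonzero with u_λ = Σ λ_i x_i. Then the sequence ... → A → A → A → ... in which each map is right multiplication by u_λ ⊗ e is exact; consequently the left A-module A u_λ satisfies Ω_A¹(A u_λ) ≅ A u_λ, i.e. it is 1-periodic. -/

import Mathlib

open TensorProduct

noncomputable section

inductive SkewRel (k : Type) [Field k] (c : ℕ) :
    FreeAlgebra k (Option (Fin c)) → FreeAlgebra k (Option (Fin c)) → Prop
  | hh : SkewRel k c (FreeAlgebra.ι k (none : Option (Fin c)) * FreeAlgebra.ι k none) 1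
  | xx (i : Fin c) : SkewRel k c (FreeAlgebra.ι k (some i) * FreeAlgebra.ι k (some i)) 0
  | anticomm (i j : Fin c) :
      SkewRel k c (FreeAlgebra.ι k (some i) * FreeAlgebra.ι k (some j))
        (-(FreeAlgebra.ι k (some j) * FreeAlgebra.ι k (some i)))
  | hx (i : Fin c) :
      SkewRel k c (FreeAlgebra.ι k (none : Option (Fin c)) * FreeAlgebra.ι k (some i))
        (-(FreeAlgebra.ι k (some i) * FreeAlgebra.ι k none))

/-- The skew group algebra `A = Λ ⋊ C₂`. -/
def SkewAlg (k : Type) [Field k] (c : ℕ) : Type := RingQuot (SkewRel k c)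

instance (k : Type) [Field k] (c : ℕ) : Ring (SkewAlg k c) := by
  unfold SkewAlg; infer_instance

instance (k : Type) [Field k] (c : ℕ) : Algebra k (SkewAlg k c) := by
  unfold SkewAlg; infer_instance

/-- The group-like generator `h` of `A = Λ ⋊ C₂`. -/
def SkewAlg.h (k : Type) [Field k] (c : ℕ) : SkewAlg k c :=
  RingQuot.mkAlgHom k (SkewRel k c) (FreeAlgebra.ι k none)

/-- The exterior generators `xᵢ` of `A = Λ ⋊ C₂`. -/
def SkewAlg.x (k : Type) [Field k] (c : ℕ) (i : Fin c) : SkewAlg k c :=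
  RingQuot.mkAlgHom k (SkewRel k c) (FreeAlgebra.ι k (some i))

/-- Right multiplication by `u` on `A`, as a map of left `A`-modules. -/
def SkewAlg.rmul (k : Type) [Field k] (c : ℕ) (u : SkewAlg k c) :
    SkewAlg k c →ₗ[SkewAlg k c] SkewAlg k c where
  toFun a := a * u
  map_add' a b := add_mul a b u
  map_smul' a b := by simp [smul_eq_mul, mul_assoc]

namespace Stmt12Aux

open CliffordAlgebra

variable (k : Type) [Field k] (c : ℕ)

/-- The quadratic form `v ↦ (v none)²`. -/
def Qf : QuadraticForm k (Option (Fin c) → k) :=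
  QuadraticMap.sq.comp (LinearMap.proj none)

@[simp] theorem Qf_apply (v : Option (Fin c) → k) : Qf k c v = v none * v none := rfl

/-- Basis vectors. -/
def ev (o : Option (Fin c)) : Option (Fin c) → k := Pi.single o 1

-- relations in SkewAlg
theorem hh : SkewAlg.h k c * SkewAlg.h k c = 1 := by
  have := RingQuot.mkAlgHom_rel k (SkewRel.hh (k := k) (c := c))
  simp only [map_mul, map_one] at this; exact this

theorem xx (i : Fin c) : SkewAlg.x k c i * SkewAlg.x k c i = 0 := by
  have := RingQuot.mkAlgHom_rel k (SkewRel.xx (k := k) (c := c) i)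
  simp only [map_mul, map_zero] at this; exact this

theorem anticomm (i j : Fin c) :
    SkewAlg.x k c i * SkewAlg.x k c j = -(SkewAlg.x k c j * SkewAlg.x k c i) := by
  have := RingQuot.mkAlgHom_rel k (SkewRel.anticomm (k := k) (c := c) i j)
  simp only [map_mul, map_neg] at this; exact this

theorem hx (i : Fin c) :
    SkewAlg.h k c * SkewAlg.x k c i = -(SkewAlg.x k c i * SkewAlg.h k c) := by
  have := RingQuot.mkAlgHom_rel k (SkewRel.hx (k := k) (c := c) i)
  simp only [map_mul, map_neg] at this; exact this

/-- The forward map `A → Cl(Q)`. -/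
def φ : SkewAlg k c →ₐ[k] CliffordAlgebra (Qf k c) :=
  RingQuot.liftAlgHom k
    ⟨FreeAlgebra.lift k fun o => CliffordAlgebra.ι (Qf k c) (ev k c o), by
      intro a b hab
      induction hab with
      | hh =>
          simp only [map_mul, map_one, FreeAlgebra.lift_ι_apply, ι_sq_scalar]
          simp [ev, Pi.single_apply]
      | xx i =>
          simp only [map_mul, map_zero, FreeAlgebra.lift_ι_apply, ι_sq_scalar]
          simp [ev, Pi.single_apply]
      | anticomm i j =>
          simp only [map_mul, map_neg, FreeAlgebra.lift_ι_apply]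
          have := ι_mul_ι_add_swap (Q := Qf k c) (ev k c (some i)) (ev k c (some j))
          rw [eq_neg_iff_add_eq_zero, this]
          simp [QuadraticMap.polar, ev, Pi.single_apply]
      | hx i =>
          simp only [map_mul, map_neg, FreeAlgebra.lift_ι_apply]
          have := ι_mul_ι_add_swap (Q := Qf k c) (ev k c none) (ev k c (some i))
          rw [eq_neg_iff_add_eq_zero, this]
          simp [QuadraticMap.polar, ev, Pi.single_apply]⟩

@[simp] theorem φ_h : φ k c (SkewAlg.h k c) = CliffordAlgebra.ι (Qf k c) (ev k c none) :=
  (RingQuot.liftAlgHom_mkAlgHom_apply _ _ _ _).trans (FreeAlgebra.lift_ι_apply _ _)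

@[simp] theorem φ_x (i : Fin c) :
    φ k c (SkewAlg.x k c i) = CliffordAlgebra.ι (Qf k c) (ev k c (some i)) :=
  (RingQuot.liftAlgHom_mkAlgHom_apply _ _ _ _).trans (FreeAlgebra.lift_ι_apply _ _)

/-- The linear map `V → A`. -/
def fLin : (Option (Fin c) → k) →ₗ[k] SkewAlg k c where
  toFun v := v none • SkewAlg.h k c + ∑ i, v (some i) • SkewAlg.x k c i
  map_add' v w := by
    simp only [Pi.add_apply, add_smul, Finset.sum_add_distrib]
    abel
  map_smul' r v := by
    simp only [Pi.smul_apply, smul_eq_mul, mul_smul, RingHom.id_apply, smul_add,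
      Finset.smul_sum]

theorem fLin_sq (hchar : (2 : k) ≠ 0) (v : Option (Fin c) → k) :
    fLin k c v * fLin k c v = algebraMap k (SkewAlg k c) (Qf k c v) := by
  set a := v none
  set s : SkewAlg k c := ∑ i, v (some i) • SkewAlg.x k c i with hs
  have hss : s * s = 0 := by
    have hexp : s * s = ∑ i, ∑ j, (v (some i) * v (some j)) •
        (SkewAlg.x k c i * SkewAlg.x k c j) := by
      rw [hs]; erw [Finset.sum_mul_sum]
      refine Finset.sum_congr rfl fun i _ => Finset.sum_congr rfl fun j _ => ?_
      rw [smul_mul_assoc, mul_smul_comm, smul_smul]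
    have pairzero : ∀ i j, SkewAlg.x k c i * SkewAlg.x k c j
        + SkewAlg.x k c j * SkewAlg.x k c i = 0 := fun i j => by
      rw [anticomm k c i j]; simp
    have h2 : (2 : k) • (s * s) = 0 := by
      rw [two_smul, hexp]
      nth_rewrite 2 [Finset.sum_comm]
      rw [← Finset.sum_add_distrib]
      refine Finset.sum_eq_zero fun i _ => ?_
      rw [← Finset.sum_add_distrib]
      refine Finset.sum_eq_zero fun j _ => ?_
      rw [mul_comm (v (some j)) (v (some i)), ← smul_add, pairzero, smul_zero]
    have := congrArg (fun z => ((2 : k)⁻¹) • z) h2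
    simpa [smul_smul, inv_mul_cancel₀ hchar] using this
  have hmix : SkewAlg.h k c * s = -(s * SkewAlg.h k c) := by
    rw [hs]; erw [Finset.mul_sum, Finset.sum_mul, ← Finset.sum_neg_distrib]
    refine Finset.sum_congr rfl fun i _ => ?_
    rw [mul_smul_comm, smul_mul_assoc, hx k c i]
    simp
  show (a • SkewAlg.h k c + s) * (a • SkewAlg.h k c + s) = _
  have expand : (a • SkewAlg.h k c + s) * (a • SkewAlg.h k c + s)
      = (a * a) • (SkewAlg.h k c * SkewAlg.h k c)
        + a • (SkewAlg.h k c * s) + a • (s * SkewAlg.h k c) + s * s := by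
    simp only [add_mul, mul_add, smul_mul_assoc, mul_smul_comm, smul_smul, smul_add]
    abel
  rw [expand, hh, hss, hmix]
  simp [Algebra.algebraMap_eq_smul_one, a]

/-- The backward map `Cl(Q) → A`. -/
def ψ (hchar : (2 : k) ≠ 0) : CliffordAlgebra (Qf k c) →ₐ[k] SkewAlg k c :=
  CliffordAlgebra.lift (Qf k c) ⟨fLin k c, fLin_sq k c hchar⟩

@[simp] theorem ψ_ι (hchar : (2 : k) ≠ 0) (v : Option (Fin c) → k) :
    ψ k c hchar (CliffordAlgebra.ι (Qf k c) v)
      = v none • SkewAlg.h k c + ∑ i, v (some i) • SkewAlg.x k c i :=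
  CliffordAlgebra.lift_ι_apply _ _ _

theorem vec_decomp (v : Option (Fin c) → k) :
    v none • ev k c none + ∑ i, v (some i) • ev k c (some i) = v := by
  funext o
  cases o with
  | none => simp [ev, Pi.single_apply]
  | some j =>
      simp [ev, Pi.single_apply, Finset.sum_apply, Finset.sum_ite_eq']

/-- The algebra isomorphism. -/
def equivCl (hchar : (2 : k) ≠ 0) : SkewAlg k c ≃ₐ[k] CliffordAlgebra (Qf k c) :=
  AlgEquiv.ofAlgHom (φ k c) (ψ k c hchar)
    (by
      apply CliffordAlgebra.hom_ext
      apply LinearMap.ext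
      intro v
      show φ k c (ψ k c hchar (CliffordAlgebra.ι (Qf k c) v)) = CliffordAlgebra.ι (Qf k c) v
      calc φ k c (ψ k c hchar (CliffordAlgebra.ι (Qf k c) v))
          = v none • CliffordAlgebra.ι (Qf k c) (ev k c none)
            + ∑ i, v (some i) • CliffordAlgebra.ι (Qf k c) (ev k c (some i)) := by
            rw [ψ_ι, map_add, map_smul, map_sum]
            simp only [map_smul, φ_h, φ_x]
        _ = CliffordAlgebra.ι (Qf k c) v := by
            conv_rhs => rw [← vec_decomp k c v]
            rw [map_add, map_smul, map_sum]
            simp only [map_smul])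
    (by
      apply RingQuot.ringQuot_ext'
      apply FreeAlgebra.hom_ext
      funext o
      simp only [AlgHom.comp_apply, Function.comp_apply, FreeAlgebra.lift_symm_apply]
      show ψ k c hchar (φ k c (RingQuot.mkAlgHom k (SkewRel k c) (FreeAlgebra.ι k o)))
        = RingQuot.mkAlgHom k (SkewRel k c) (FreeAlgebra.ι k o)
      cases o with
      | none =>
          rw [show RingQuot.mkAlgHom k (SkewRel k c) (FreeAlgebra.ι k none)
            = SkewAlg.h k c from rfl, φ_h, ψ_ι]
          simp [ev, Pi.single_apply]
      | some j =>
          rw [show RingQuot.mkAlgHom k (SkewRel k c) (FreeAlgebra.ι k (some j))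
            = SkewAlg.x k c j from rfl, φ_x, ψ_ι]
          simp [ev, Pi.single_apply])

@[simp] theorem equivCl_h (hchar : (2 : k) ≠ 0) :
    equivCl k c hchar (SkewAlg.h k c) = CliffordAlgebra.ι (Qf k c) (ev k c none) := φ_h k c

@[simp] theorem equivCl_x (hchar : (2 : k) ≠ 0) (i : Fin c) :
    equivCl k c hchar (SkewAlg.x k c i) = CliffordAlgebra.ι (Qf k c) (ev k c (some i)) :=
  φ_x k c i


variable (lam : Fin c → k)

/-- The vector in `k^{1+c}` corresponding to `u`. -/
def mvec : Option (Fin c) → k := fun o => Option.elim o 0 lam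

theorem mvec_decomp : (∑ i, lam i • ev k c (some i)) = mvec k c lam := by
  funext o
  cases o with
  | none => simp [ev, Pi.single_apply, mvec, Finset.sum_apply]
  | some j => simp [ev, Pi.single_apply, mvec, Finset.sum_apply, Finset.sum_ite_eq']

theorem equivCl_u (hchar : (2 : k) ≠ 0) :
    equivCl k c hchar (∑ i, lam i • SkewAlg.x k c i)
      = CliffordAlgebra.ι (Qf k c) (mvec k c lam) := by
  rw [map_sum]
  simp only [map_smul, equivCl_x]
  conv_rhs => rw [← mvec_decomp k c lam]
  rw [map_sum]
  simp only [map_smul]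

theorem u_sq (hchar : (2 : k) ≠ 0) :
    (∑ i, lam i • SkewAlg.x k c i) * (∑ i, lam i • SkewAlg.x k c i) = 0 := by
  apply (equivCl k c hchar).injective
  rw [map_mul, equivCl_u k c lam hchar, CliffordAlgebra.ι_sq_scalar]
  simp [mvec]

@[simp] theorem rmul_apply (u a : SkewAlg k c) : SkewAlg.rmul k c u a = a * u := rfl

theorem key (hchar : (2 : k) ≠ 0) (hlam : lam ≠ 0) (a : SkewAlg k c)
    (ha : a * (∑ i, lam i • SkewAlg.x k c i) = 0) :
    ∃ b, b * (∑ i, lam i • SkewAlg.x k c i) = a := by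
  obtain ⟨i0, hi0⟩ : ∃ i, lam i ≠ 0 := by
    by_contra h
    push_neg at h
    exact hlam (funext h)
  set e := equivCl k c hchar with he
  set d : Module.Dual k (Option (Fin c) → k) :=
    (lam i0)⁻¹ • LinearMap.proj (some i0) with hdd
  have hd : d (mvec k c lam) = 1 := by
    simp [hdd, mvec, LinearMap.smul_apply, LinearMap.proj_apply, inv_mul_cancel₀ hi0]
  refine ⟨e.symm (CliffordAlgebra.contractRight (e a) d), ?_⟩
  have h2 : e a * CliffordAlgebra.ι (Qf k c) (mvec k c lam) = 0 := by
    rw [← equivCl_u k c lam hchar, ← he, ← map_mul, ha, map_zero]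
  have h1 := CliffordAlgebra.contractRight_mul_ι (Q := Qf k c) (d := d) (mvec k c lam) (e a)
  rw [h2, hd, one_smul, map_zero, LinearMap.zero_apply, eq_comm, sub_eq_zero] at h1
  apply e.injective
  rw [map_mul, e.apply_symm_apply, equivCl_u k c lam hchar]
  exact h1.symm

end Stmt12Aux

/-- Let `k` be a field of characteristic not 2, `A = Λ ⋊ C₂`, and `λ ∈ k^c`
nonzero, with `u_λ = Σ λᵢ xᵢ` (viewed in `A` as `u_λ ⊗ e`). Then the doubly infinite sequence
`... → A → A → A → ...` given by right multiplication by `u_λ` is exact (the kernel of right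
multiplication equals its image `A u_λ`); consequently `Ω¹_A(A u_λ) ≅ A u_λ`, i.e. the left
`A`-module `A u_λ` is 1-periodic. -/
theorem stmt12 (k : Type) [Field k] (hchar : (2 : k) ≠ 0) (c : ℕ)
    (lam : Fin c → k) (hlam : lam ≠ 0) :
    letI u : SkewAlg k c := ∑ i, lam i • SkewAlg.x k c i
    LinearMap.ker (SkewAlg.rmul k c u) = LinearMap.range (SkewAlg.rmul k c u) ∧
    LinearMap.range (SkewAlg.rmul k c u) = Submodule.span (SkewAlg k c) {u} ∧
    Nonempty (↥(LinearMap.ker (SkewAlg.rmul k c u)) ≃ₗ[SkewAlg k c]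
      ↥(Submodule.span (SkewAlg k c) {u})) := by
  set u : SkewAlg k c := ∑ i, lam i • SkewAlg.x k c i with hu
  have h1 : LinearMap.ker (SkewAlg.rmul k c u) = LinearMap.range (SkewAlg.rmul k c u) := by
    ext a
    rw [LinearMap.mem_ker, LinearMap.mem_range]
    constructor
    · intro ha
      obtain ⟨b, hb⟩ := Stmt12Aux.key k c lam hchar hlam a (by simpa using ha)
      exact ⟨b, hb⟩
    · rintro ⟨b, rfl⟩
      show b * u * u = 0
      rw [mul_assoc, hu, Stmt12Aux.u_sq k c lam hchar, mul_zero]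
  have h2 : LinearMap.range (SkewAlg.rmul k c u) = Submodule.span (SkewAlg k c) {u} := by
    ext a
    rw [LinearMap.mem_range, Submodule.mem_span_singleton]
    simp only [Stmt12Aux.rmul_apply, smul_eq_mul]
  exact ⟨h1, h2, ⟨LinearEquiv.ofEq _ _ (h1.trans h2)⟩⟩
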